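/- Let n ≥ 1, let x ∈ {0,1}^n, and let q ∈ (0,1). The expected number of runs of 1s in a trace of x obtained by passing x through an i.i.d. deletion channel with deletion probability q is E[R_{x,1}] = (1−q)·( w_H(x) − ((1−q)/q)·Σ_{i,j ∈ S_x, i<j} q^{j−i} ). -/

import Mathlib

open Finset

/-- Number of deletions in a deletion pattern (number of `1`s in `ω`). -/
def wt {n : ℕ} (ω : Fin n → Bool) : ℕ := (univ.filter fun j => ω j = true).card

/-- Trace of `x` under deletion pattern `ω`: the subsequence of bits `x j`
at the positions `j` with `ω j = 0`, in increasing order of position. -/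
def trc {n : ℕ} (x ω : Fin n → Bool) : List Bool :=
  ((List.finRange n).filter fun j => ω j = false).map x

/-- Total number of runs (maximal blocks of equal bits) in a binary list. -/
def numRuns (l : List Bool) : ℕ := (l.destutter (· ≠ ·)).length

/-- Number of runs of `0`s in a binary list. -/
def numZeroRuns (l : List Bool) : ℕ := (l.destutter (· ≠ ·)).count false

/-- Number of runs of `1`s in a binary list. -/
def numOneRuns (l : List Bool) : ℕ := (l.destutter (· ≠ ·)).count true

namespace DelAux




/-- one-run count of a list given the preceding surviving bit (`none` = list start). -/
def nORF : Option Bool → List Bool → ℕ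
  | _, [] => 0
  | s, a :: t => (if a = true ∧ s ≠ some true then 1 else 0) + nORF (some a) t

theorem count_destutter' (l : List Bool) : ∀ a : Bool,
    ((List.destutter' (· ≠ ·) a l).count true)
      = (if a = true then 1 else 0) + nORF (some a) l := by
  induction l with
  | nil => intro a; cases a <;> simp [List.destutter'_nil, nORF]
  | cons b l ih =>
    intro a
    rw [List.destutter'_cons]
    by_cases h : a = b
    · subst h
      rw [if_neg (by simp)]
      rw [ih a]
      simp [nORF]
    · rw [if_pos (by simpa using h)]
      rw [List.count_cons, ih b]
      cases a <;> cases b <;> simp_all [nORF] <;> omega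

theorem numOneRuns_eq (t : List Bool) : numOneRuns t = nORF none t := by
  cases t with
  | nil => simp [numOneRuns, nORF, List.destutter]
  | cons a l =>
    have : (a :: l).destutter (· ≠ ·) = l.destutter' (· ≠ ·) a := rfl
    rw [numOneRuns, this, count_destutter']
    cases a <;> simp [nORF]



variable (y d : ℕ → Bool)

/-- run-start count over original positions. -/
def cnt : Option Bool → List ℕ → ℕ
  | _, [] => 0
  | s, j :: l => if d j = true then cnt s l
      else (if y j = true ∧ s ≠ some true then 1 else 0) + cnt (some (y j)) l

/-- last surviving bit after processing positions `l`, starting from state `s`. -/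
def lsv (s : Option Bool) (l : List ℕ) : Option Bool :=
  l.foldl (fun a i => if d i = true then a else some (y i)) s

/-- position `i` starts a run of ones only if no surviving one before `i` is last-surviving. -/
def Bnat (i : ℕ) : Prop :=
  ∀ j < i, d j = false → y j = true → ∃ k < i, j < k ∧ d k = false

instance (i : ℕ) : Decidable (Bnat y d i) := by unfold Bnat; exact inferInstance

theorem nORF_trace (l : List ℕ) : ∀ s,
    nORF s ((l.filter fun i => d i = false).map y) = cnt y d s l := by
  induction l with
  | nil => intro s; simp [nORF, cnt]
  | cons j l ih =>
    intro s
    by_cases h : d j = true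
    · rw [List.filter_cons, if_neg (by simp [h])]
      rw [ih s]
      rw [cnt, if_pos h]
    · rw [List.filter_cons, if_pos (by simp [h])]
      rw [List.map_cons]
      rw [nORF, ih (some (y j))]
      rw [cnt, if_neg h]

theorem lsv_append (l₁ l₂ : List ℕ) (s : Option Bool) :
    lsv y d s (l₁ ++ l₂) = lsv y d (lsv y d s l₁) l₂ := by
  simp [lsv, List.foldl_append]

theorem cnt_append (l₂ : List ℕ) : ∀ (l₁ : List ℕ) (s : Option Bool),
    cnt y d s (l₁ ++ l₂) = cnt y d s l₁ + cnt y d (lsv y d s l₁) l₂ := by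
  intro l₁
  induction l₁ with
  | nil => intro s; simp [cnt, lsv]
  | cons j l ih =>
    intro s
    by_cases h : d j = true
    · rw [List.cons_append, cnt, if_pos h, ih s, cnt, if_pos h]
      congr 2
      simp [lsv, h]
    · rw [List.cons_append, cnt, if_neg h, ih (some (y j)), cnt, if_neg h, add_assoc]
      congr 2
      simp [lsv, h]

theorem lsv_range : ∀ m : ℕ, (lsv y d none (List.range m) ≠ some true) ↔ Bnat y d m := by
  intro m
  induction m with
  | zero => simp [lsv, Bnat]
  | succ n ih =>
    rw [List.range_succ, lsv_append]
    have hstep : lsv y d (lsv y d none (List.range n)) [n]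
        = if d n = true then lsv y d none (List.range n) else some (y n) := by
      simp [lsv]
    rw [hstep]
    by_cases hdn : d n = true
    · rw [if_pos hdn, ih]
      constructor
      · intro hB j hj hdj hyj
        have hj' : j < n := by
          rcases Nat.lt_succ_iff_lt_or_eq.mp hj with h | h
          · exact h
          · subst h; rw [hdn] at hdj; exact absurd hdj (by simp)
        obtain ⟨k, hk, hjk, hdk⟩ := hB j hj' hdj hyj
        exact ⟨k, Nat.lt_succ_of_lt hk, hjk, hdk⟩
      · intro hB j hj hdj hyj
        obtain ⟨k, hk, hjk, hdk⟩ := hB j (Nat.lt_succ_of_lt hj) hdj hyj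
        have hk' : k < n := by
          rcases Nat.lt_succ_iff_lt_or_eq.mp hk with h | h
          · exact h
          · subst h; rw [hdn] at hdk; exact absurd hdk (by simp)
        exact ⟨k, hk', hjk, hdk⟩
    · rw [if_neg hdn]
      have hdn' : d n = false := by simpa using hdn
      constructor
      · intro hne j hj hdj hyj
        have hyn : y n ≠ true := fun h => hne (by rw [h])
        have hj' : j < n := by
          rcases Nat.lt_succ_iff_lt_or_eq.mp hj with h | h
          · exact h
          · subst h; exact absurd hyj hyn
        exact ⟨n, Nat.lt_succ_self n, hj', hdn'⟩
      · intro hB hcontra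
        have hyn : y n = true := by simpa using hcontra
        obtain ⟨k, hk, hjk, _⟩ := hB n (Nat.lt_succ_self n) hdn' hyn
        omega

theorem cnt_range : ∀ m : ℕ, cnt y d none (List.range m)
    = ∑ i ∈ Finset.range m, (if d i = false ∧ y i = true ∧ Bnat y d i then 1 else 0) := by
  intro m
  induction m with
  | zero => simp [cnt]
  | succ n ih =>
    rw [List.range_succ, cnt_append, ih, Finset.sum_range_succ]
    congr 1
    have h1 : ∀ s, cnt y d s [n] = if d n = true then 0
        else if y n = true ∧ s ≠ some true then 1 else 0 := by
      intro s
      by_cases h : d n = true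
      · rw [cnt, if_pos h, if_pos h]; rfl
      · rw [cnt, if_neg h, if_neg h]; rw [cnt]; ring
    rw [h1]
    by_cases hdn : d n = true
    · rw [if_pos hdn, if_neg (by simp [hdn])]
    · have hdn' : d n = false := by simpa using hdn
      rw [if_neg hdn]
      by_cases hyn : y n = true
      · by_cases hB : Bnat y d n
        · rw [if_pos ⟨hyn, (lsv_range y d n).mpr hB⟩, if_pos ⟨hdn', hyn, hB⟩]
        · rw [if_neg, if_neg (by tauto)]
          intro ⟨_, hne⟩
          exact hB ((lsv_range y d n).mp hne)
      · rw [if_neg (by tauto), if_neg (by tauto)]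
/-- `i` starts a run of ones in the trace (given it survives and is a one). -/
def BF {n : ℕ} (x ω : Fin n → Bool) (i : Fin n) : Prop :=
  ∀ j, j < i → ω j = false → x j = true → ∃ k, k < i ∧ j < k ∧ ω k = false

instance {n : ℕ} (x ω : Fin n → Bool) (i : Fin n) : Decidable (BF x ω i) := by
  unfold BF; exact inferInstance

theorem numOneRuns_trc {n : ℕ} (x ω : Fin n → Bool) :
    numOneRuns (trc x ω)
      = (univ.filter fun i : Fin n => x i = true ∧ ω i = false ∧ BF x ω i).card := by
  classical
  set y : ℕ → Bool := fun i => if h : i < n then x ⟨i, h⟩ else false with hy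
  set d : ℕ → Bool := fun i => if h : i < n then ω ⟨i, h⟩ else false with hd
  have hyv : ∀ j : Fin n, y j.val = x j := by
    intro j; simp only [hy]; rw [dif_pos j.isLt]
  have hdv : ∀ j : Fin n, d j.val = ω j := by
    intro j; simp only [hd]; rw [dif_pos j.isLt]
  have htr : trc x ω = ((List.range n).filter fun i => d i = false).map y := by
    rw [← List.map_coe_finRange_eq_range, List.filter_map, List.map_map]
    unfold trc
    rw [List.filter_congr (p := fun j : Fin n => decide (ω j = false))
      (q := (fun i => decide (d i = false)) ∘ Fin.val) (fun j _ => by simp [hdv j])]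
    exact (List.map_congr_left (fun j _ => (hyv j).symm))
  have hBnat : ∀ i : Fin n, Bnat y d i.val ↔ BF x ω i := by
    intro i
    constructor
    · intro h j hj hωj hxj
      have hj' : (j : ℕ) < (i : ℕ) := hj
      obtain ⟨k, hk, hjk, hdk⟩ := h j.val hj' (by rw [hdv j]; exact hωj) (by rw [hyv j]; exact hxj)
      have hkn : k < n := lt_trans hk i.isLt
      refine ⟨⟨k, hkn⟩, hk, hjk, ?_⟩
      rw [← hdv ⟨k, hkn⟩]; exact hdk
    · intro h j hj hdj hyj
      have hjn : j < n := lt_trans hj i.isLt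
      obtain ⟨k, hk, hjk, hωk⟩ := h ⟨j, hjn⟩ hj (by rw [← hdv ⟨j, hjn⟩]; exact hdj)
        (by rw [← hyv ⟨j, hjn⟩]; exact hyj)
      exact ⟨k.val, hk, hjk, by rw [hdv k]; exact hωk⟩
  rw [htr, numOneRuns_eq, nORF_trace, cnt_range]
  rw [Finset.card_filter]
  rw [← Fin.sum_univ_eq_sum_range (fun i => if d i = false ∧ y i = true ∧ Bnat y d i then 1 else 0) n]
  apply Finset.sum_congr rfl
  intro i _
  apply if_congr _ rfl rfl
  rw [hyv i, hdv i, hBnat i]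
  tauto




/-- per-coordinate channel weight. -/
def w (q : ℝ) (b : Bool) : ℝ := if b = true then q else 1 - q

theorem weight_eq {n : ℕ} (q : ℝ) (ω : Fin n → Bool) :
    q ^ wt ω * (1 - q) ^ (n - wt ω) = ∏ j, w q (ω j) := by
  have : ∀ j : Fin n, w q (ω j) = if ω j = true then q else 1 - q := fun j => rfl
  rw [Finset.prod_congr rfl (fun j _ => this j)]
  rw [Finset.prod_ite, Finset.prod_const, Finset.prod_const]
  have h' := Finset.card_filter_add_card_filter_not
      (s := (univ : Finset (Fin n))) (p := fun j => ω j = true)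
  simp only [Finset.card_univ, Fintype.card_fin] at h'
  have h2 : (univ.filter fun x : Fin n => ¬ ω x = true).card = n - wt ω := by
    unfold wt at *
    omega
  rw [h2]
  rfl

theorem sumW {n : ℕ} (g : Fin n → Bool → ℝ) :
    ∑ ω : Fin n → Bool, ∏ j, g j (ω j) = ∏ j, (g j true + g j false) := by
  classical
  calc ∑ ω : Fin n → Bool, ∏ j, g j (ω j)
      = ∑ ω ∈ Fintype.piFinset (fun _ : Fin n => (univ : Finset Bool)), ∏ j, g j (ω j) := by
        rw [Fintype.piFinset_univ]
    _ = ∏ j, ∑ b : Bool, g j b := (Finset.prod_univ_sum _ _).symm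
    _ = ∏ j, (g j true + g j false) := by
        apply Finset.prod_congr rfl; intro j _; simp

/-- sum of weights over a rectangle event given by partial constraints `c`. -/
theorem rect {n : ℕ} (q : ℝ) (c : Fin n → Option Bool) :
    ∑ ω : Fin n → Bool,
        (∏ j, w q (ω j)) * (if (∀ j b, c j = some b → ω j = b) then (1:ℝ) else 0)
      = ∏ j, Option.elim (c j) 1 (w q) := by
  classical
  set g : Fin n → Bool → ℝ :=
    fun j b0 => w q b0 * (if (∀ b, c j = some b → b0 = b) then (1:ℝ) else 0) with hg
  have key : ∀ ω : Fin n → Bool,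
      (∏ j, w q (ω j)) * (if (∀ j b, c j = some b → ω j = b) then (1:ℝ) else 0)
        = ∏ j, g j (ω j) := by
    intro ω
    simp only [hg]
    rw [Finset.prod_mul_distrib]
    congr 1
    by_cases hA : ∀ j b, c j = some b → ω j = b
    · rw [if_pos hA, eq_comm]
      apply Finset.prod_eq_one
      intro j _
      exact if_pos (fun b h => hA j b h)
    · rw [if_neg hA, eq_comm]
      push_neg at hA
      obtain ⟨j, b, hc, hne⟩ := hA
      apply Finset.prod_eq_zero (Finset.mem_univ j)
      exact if_neg (fun hall => hne (hall b hc))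
  rw [Finset.sum_congr rfl (fun ω _ => key ω)]
  rw [sumW g]
  apply Finset.prod_congr rfl
  intro j _
  rcases hc : c j with _ | b
  · simp [hg, hc, w]
  · cases b <;> simp [hg, hc, w]

theorem eventSingle {n : ℕ} (q : ℝ) (i : Fin n) :
    ∑ ω : Fin n → Bool,
        (∏ j, w q (ω j)) * (if ω i = false then (1:ℝ) else 0) = 1 - q := by
  classical
  set c : Fin n → Option Bool := fun j => if j = i then some false else none with hc
  have hiff : ∀ ω : Fin n → Bool, (∀ j b, c j = some b → ω j = b) ↔ ω i = false := by
    intro ω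
    constructor
    · intro h; exact h i false (by simp [hc])
    · intro h j b hcb
      by_cases hj : j = i
      · subst hj
        rw [hc] at hcb; simp at hcb
        rw [hcb]; exact h
      · rw [hc] at hcb; simp [hj] at hcb
  have := rect q c
  rw [Finset.sum_congr rfl (fun ω _ => by rw [if_congr (hiff ω) rfl rfl])] at this
  rw [this]
  have : ∀ j : Fin n, Option.elim (c j) (1:ℝ) (w q) = if j = i then 1 - q else 1 := by
    intro j; by_cases h : j = i <;> simp [hc, h, w]
  rw [Finset.prod_congr rfl (fun j _ => this j), Finset.prod_ite_eq' univ i (fun _ => 1 - q)]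
  simp

theorem eventPair {n : ℕ} (q : ℝ) (i j0 : Fin n) (hij : j0 < i) :
    ∑ ω : Fin n → Bool,
        (∏ j, w q (ω j)) *
          (if ω i = false ∧ ω j0 = false ∧ (∀ k, j0 < k → k < i → ω k = true)
            then (1:ℝ) else 0)
      = (1 - q) ^ 2 * q ^ ((i : ℕ) - (j0 : ℕ) - 1) := by
  classical
  have hne : j0 ≠ i := ne_of_lt hij
  set c : Fin n → Option Bool := fun k =>
    if k = i ∨ k = j0 then some false else if j0 < k ∧ k < i then some true else none with hc
  have hiff : ∀ ω : Fin n → Bool, (∀ j b, c j = some b → ω j = b) ↔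
      (ω i = false ∧ ω j0 = false ∧ (∀ k, j0 < k → k < i → ω k = true)) := by
    intro ω
    constructor
    · intro h
      refine ⟨h i false (by simp [hc]), h j0 false (by simp [hc]), ?_⟩
      intro k hk1 hk2
      have hki : k ≠ i := ne_of_lt hk2
      have hkj : k ≠ j0 := (ne_of_lt hk1).symm
      exact h k true (by simp [hc, hki, hkj, hk1, hk2])
    · rintro ⟨h1, h2, h3⟩ j b hcb
      have hcb' : (if j = i ∨ j = j0 then some false
          else if j0 < j ∧ j < i then some true else none) = some b := hcb
      by_cases hor : j = i ∨ j = j0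
      · rw [if_pos hor] at hcb'
        have hb : b = false := by simpa using hcb'.symm
        subst hb
        rcases hor with h | h <;> subst h
        · exact h1
        · exact h2
      · rw [if_neg hor] at hcb'
        by_cases hbet : j0 < j ∧ j < i
        · rw [if_pos hbet] at hcb'
          have hb : b = true := by simpa using hcb'.symm
          subst hb
          exact h3 j hbet.1 hbet.2
        · rw [if_neg hbet] at hcb'; exact absurd hcb' (by simp)
  have hr := rect q c
  rw [Finset.sum_congr rfl (fun ω _ => by rw [if_congr (hiff ω) rfl rfl])] at hr
  rw [hr]
  have helim : ∀ k : Fin n, Option.elim (c k) (1:ℝ) (w q)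
      = if k = i ∨ k = j0 then 1 - q else if j0 < k ∧ k < i then q else 1 := by
    intro k
    by_cases h1 : k = i ∨ k = j0
    · simp [hc, h1, w]
    · by_cases h2 : j0 < k ∧ k < i <;> simp [hc, h1, h2, w]
  rw [Finset.prod_congr rfl (fun k _ => helim k)]
  rw [Finset.prod_ite, Finset.prod_const, Finset.prod_ite, Finset.prod_const,
    Finset.prod_const_one, mul_one]
  have hcard1 : (univ.filter fun k : Fin n => k = i ∨ k = j0).card = 2 := by
    have : (univ.filter fun k : Fin n => k = i ∨ k = j0) = {i, j0} := by
      ext k; simp [or_comm]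
    rw [this, Finset.card_insert_of_notMem (by simp [hne.symm]), Finset.card_singleton]
  have hcard2 : ((univ.filter fun k : Fin n => ¬(k = i ∨ k = j0)).filter
      fun k => j0 < k ∧ k < i).card = (i : ℕ) - (j0 : ℕ) - 1 := by
    rw [Finset.filter_filter]
    have : (univ.filter fun k : Fin n => ¬(k = i ∨ k = j0) ∧ (j0 < k ∧ k < i))
        = Finset.Ioo j0 i := by
      ext k
      simp only [Finset.mem_filter, Finset.mem_univ, true_and, Finset.mem_Ioo]
      constructor
      · rintro ⟨_, h⟩; exact h
      · rintro ⟨h1, h2⟩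
        exact ⟨by push_neg; exact ⟨ne_of_lt h2, (ne_of_lt h1).symm⟩, h1, h2⟩
    rw [this, Fin.card_Ioo]
  rw [hcard1, hcard2]
theorem perI {n : ℕ} (q : ℝ) (x : Fin n → Bool) (i : Fin n) :
    ∑ ω : Fin n → Bool,
        (∏ j, w q (ω j)) * (if ω i = false ∧ BF x ω i then (1:ℝ) else 0)
      = (1 - q) - ∑ j0 ∈ univ.filter (fun j : Fin n => x j = true ∧ j < i),
          (1 - q) ^ 2 * q ^ ((i : ℕ) - (j0 : ℕ) - 1) := by
  classical
  set s := univ.filter (fun j : Fin n => x j = true ∧ j < i) with hs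
  have key : ∀ ω : Fin n → Bool,
      (if ω i = false ∧ BF x ω i then (1:ℝ) else 0)
        = (if ω i = false then (1:ℝ) else 0)
          - ∑ j0 ∈ s, (if ω i = false ∧ ω j0 = false ∧ (∀ k, j0 < k → k < i → ω k = true)
              then (1:ℝ) else 0) := by
    intro ω
    by_cases hωi : ω i = false
    · by_cases hB : BF x ω i
      · rw [if_pos ⟨hωi, hB⟩, if_pos hωi]
        have hz : ∑ j0 ∈ s, (if ω i = false ∧ ω j0 = false ∧
            (∀ k, j0 < k → k < i → ω k = true) then (1:ℝ) else 0) = 0 := by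
          apply Finset.sum_eq_zero
          intro j0 hj0
          rw [Finset.mem_filter] at hj0
          obtain ⟨-, hx0, hlt0⟩ := hj0
          apply if_neg
          rintro ⟨-, hωj0, hall⟩
          obtain ⟨k, hk, hjk, hωk⟩ := hB j0 hlt0 hωj0 hx0
          have := hall k hjk hk
          rw [hωk] at this
          exact Bool.false_ne_true this
        rw [hz]; ring
      · rw [if_neg (fun h => hB h.2), if_pos hωi]
        unfold BF at hB
        push_neg at hB
        obtain ⟨js, hjsi, hωjs, hxjs, hmax⟩ := hB
        have hsum : ∑ j0 ∈ s, (if ω i = false ∧ ω j0 = false ∧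
            (∀ k, j0 < k → k < i → ω k = true) then (1:ℝ) else 0) = 1 := by
          rw [Finset.sum_eq_single_of_mem js (by simp [hs, hxjs, hjsi])]
          · apply if_pos
            refine ⟨hωi, hωjs, ?_⟩
            intro k hk1 hk2
            have := hmax k hk2 hk1
            cases hωk : ω k
            · exact absurd hωk this
            · rfl
          · intro j0 hj0 hne
            rw [Finset.mem_filter] at hj0
            obtain ⟨-, hx0, hlt0⟩ := hj0
            apply if_neg
            rintro ⟨-, hωj0, hall0⟩
            rcases lt_trichotomy j0 js with h | h | h
            · have := hall0 js h hjsi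
              rw [hωjs] at this
              exact Bool.false_ne_true this
            · exact hne h
            · exact (hmax j0 hlt0 h) hωj0
        rw [hsum]; ring
    · rw [if_neg (fun h => hωi h.1), if_neg hωi]
      have hz : ∑ j0 ∈ s, (if ω i = false ∧ ω j0 = false ∧
          (∀ k, j0 < k → k < i → ω k = true) then (1:ℝ) else 0) = 0 :=
        Finset.sum_eq_zero (fun j0 _ => if_neg (fun h => hωi h.1))
      rw [hz]; ring
  calc ∑ ω : Fin n → Bool, (∏ j, w q (ω j)) * (if ω i = false ∧ BF x ω i then (1:ℝ) else 0)
      = ∑ ω : Fin n → Bool, ((∏ j, w q (ω j)) * (if ω i = false then (1:ℝ) else 0)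
          - ∑ j0 ∈ s, (∏ j, w q (ω j)) *
              (if ω i = false ∧ ω j0 = false ∧ (∀ k, j0 < k → k < i → ω k = true)
                then (1:ℝ) else 0)) := by
        apply Finset.sum_congr rfl
        intro ω _
        rw [key ω, mul_sub, Finset.mul_sum]
    _ = (∑ ω : Fin n → Bool, (∏ j, w q (ω j)) * (if ω i = false then (1:ℝ) else 0))
          - ∑ ω : Fin n → Bool, ∑ j0 ∈ s, (∏ j, w q (ω j)) *
              (if ω i = false ∧ ω j0 = false ∧ (∀ k, j0 < k → k < i → ω k = true)
                then (1:ℝ) else 0) := Finset.sum_sub_distrib _ _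
    _ = (1 - q) - ∑ j0 ∈ s, ∑ ω : Fin n → Bool, (∏ j, w q (ω j)) *
              (if ω i = false ∧ ω j0 = false ∧ (∀ k, j0 < k → k < i → ω k = true)
                then (1:ℝ) else 0) := by rw [eventSingle, Finset.sum_comm]
    _ = (1 - q) - ∑ j0 ∈ s, (1 - q) ^ 2 * q ^ ((i : ℕ) - (j0 : ℕ) - 1) := by
        congr 1
        apply Finset.sum_congr rfl
        intro j0 hj0
        rw [Finset.mem_filter] at hj0
        exact eventPair q i j0 hj0.2.2

theorem swap_pairs {n : ℕ} (x : Fin n → Bool) (f : Fin n → Fin n → ℝ) :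
    (∑ i ∈ univ.filter (fun i : Fin n => x i = true),
      ∑ j ∈ univ.filter (fun j : Fin n => x j = true ∧ i < j), f i j)
  = ∑ i ∈ univ.filter (fun i : Fin n => x i = true),
      ∑ j ∈ univ.filter (fun j : Fin n => x j = true ∧ j < i), f j i := by
  classical
  have expand : ∀ (P : Fin n → Fin n → Prop) (_ : ∀ i j, Decidable (P i j))
      (g : Fin n → Fin n → ℝ),
      (∑ i ∈ univ.filter (fun i : Fin n => x i = true),
        ∑ j ∈ univ.filter (fun j : Fin n => x j = true ∧ P i j), g i j)
      = ∑ i : Fin n, ∑ j : Fin n,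
          if x i = true ∧ x j = true ∧ P i j then g i j else 0 := by
    intro P hdec g
    rw [Finset.sum_filter]
    apply Finset.sum_congr rfl
    intro i _
    by_cases hxi : x i = true
    · rw [if_pos hxi, Finset.sum_filter]
      apply Finset.sum_congr rfl
      intro j _
      apply if_congr _ rfl rfl
      tauto
    · rw [if_neg hxi, eq_comm]
      apply Finset.sum_eq_zero
      intro j _
      exact if_neg (fun h => hxi h.1)
  rw [expand (fun i j => i < j) (fun i j => inferInstance) f,
    expand (fun i j => j < i) (fun i j => inferInstance) (fun i j => f j i)]
  rw [Finset.sum_comm]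
  apply Finset.sum_congr rfl
  intro i _
  apply Finset.sum_congr rfl
  intro j _
  apply if_congr _ rfl rfl
  tauto

end DelAux

open DelAux in
/-- Expected number of runs of `1`s in a trace of `x` through the i.i.d. deletion
channel with deletion probability `q`. -/
theorem expected_one_runs (n : ℕ) (hn : 1 ≤ n) (x : Fin n → Bool)
    (q : ℝ) (hq0 : 0 < q) (hq1 : q < 1) :
    (∑ ω : Fin n → Bool,
        q ^ wt ω * (1 - q) ^ (n - wt ω) * (numOneRuns (trc x ω) : ℝ)) =
      (1 - q) * (((univ.filter fun i : Fin n => x i = true).card : ℝ)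
        - (1 - q) / q *
            ∑ i ∈ univ.filter (fun i : Fin n => x i = true),
              ∑ j ∈ univ.filter (fun j : Fin n => x j = true ∧ i < j),
                q ^ ((j : ℕ) - (i : ℕ))) := by
  classical
  have hq' : q ≠ 0 := ne_of_gt hq0
  set S := univ.filter (fun i : Fin n => x i = true) with hS
  -- Step 1: rewrite the LHS
  have step1 : (∑ ω : Fin n → Bool,
        q ^ wt ω * (1 - q) ^ (n - wt ω) * (numOneRuns (trc x ω) : ℝ))
      = ∑ i : Fin n, ∑ ω : Fin n → Bool, (∏ j, w q (ω j)) *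
          (if x i = true ∧ ω i = false ∧ BF x ω i then (1:ℝ) else 0) := by
    rw [← Finset.sum_comm]
    apply Finset.sum_congr rfl
    intro ω _
    rw [weight_eq, numOneRuns_trc]
    rw [Finset.card_filter]
    push_cast
    rw [Finset.mul_sum]
  rw [step1]
  -- Step 2: evaluate the inner sum for each i
  have step2 : ∀ i : Fin n, (∑ ω : Fin n → Bool, (∏ j, w q (ω j)) *
          (if x i = true ∧ ω i = false ∧ BF x ω i then (1:ℝ) else 0))
      = if x i = true then ((1 - q) - ∑ j0 ∈ univ.filter (fun j : Fin n => x j = true ∧ j < i),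
          (1 - q) ^ 2 * q ^ ((i : ℕ) - (j0 : ℕ) - 1)) else 0 := by
    intro i
    by_cases hxi : x i = true
    · rw [if_pos hxi, ← perI q x i]
      apply Finset.sum_congr rfl
      intro ω _
      congr 1
      apply if_congr _ rfl rfl
      tauto
    · rw [if_neg hxi]
      apply Finset.sum_eq_zero
      intro ω _
      rw [if_neg (fun h => hxi h.1), mul_zero]
  rw [Finset.sum_congr rfl (fun i _ => step2 i)]
  rw [← Finset.sum_filter]
  rw [Finset.sum_sub_distrib, Finset.sum_const, nsmul_eq_mul]
  -- Step 3: the pair-sum identity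
  have hswap := swap_pairs x (fun i j => q ^ ((j : ℕ) - (i : ℕ)))
  have hT : (∑ i ∈ S, ∑ j ∈ univ.filter (fun j : Fin n => x j = true ∧ i < j),
        q ^ ((j : ℕ) - (i : ℕ)))
      = q * ∑ i ∈ S, ∑ j ∈ univ.filter (fun j : Fin n => x j = true ∧ j < i),
          q ^ ((i : ℕ) - (j : ℕ) - 1) := by
    rw [hS, hswap, Finset.mul_sum]
    apply Finset.sum_congr rfl
    intro i _
    rw [Finset.mul_sum]
    apply Finset.sum_congr rfl
    intro j hj
    rw [Finset.mem_filter] at hj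
    have hlt : (j : ℕ) < (i : ℕ) := hj.2.2
    have he : (i : ℕ) - (j : ℕ) = ((i : ℕ) - (j : ℕ) - 1) + 1 := by omega
    rw [he, pow_succ]
    exact mul_comm _ _
  have hpull : (∑ i ∈ S, ∑ j0 ∈ univ.filter (fun j : Fin n => x j = true ∧ j < i),
        (1 - q) ^ 2 * q ^ ((i : ℕ) - (j0 : ℕ) - 1))
      = (1 - q) ^ 2 * ∑ i ∈ S, ∑ j0 ∈ univ.filter (fun j : Fin n => x j = true ∧ j < i),
          q ^ ((i : ℕ) - (j0 : ℕ) - 1) := by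
    rw [Finset.mul_sum]
    apply Finset.sum_congr rfl
    intro i _
    rw [Finset.mul_sum]
  rw [hpull, hT]
  have hfrac : (1 - q) / q * (q * ∑ i ∈ S, ∑ j ∈ univ.filter (fun j : Fin n => x j = true ∧ j < i),
      q ^ ((i : ℕ) - (j : ℕ) - 1)) = (1 - q) * ∑ i ∈ S, ∑ j ∈ univ.filter (fun j : Fin n => x j = true ∧ j < i),
      q ^ ((i : ℕ) - (j : ℕ) - 1) := by
    rw [← mul_assoc, div_mul_cancel₀ _ hq']
  rw [hfrac]
  ring
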